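/- Let θ > 0, C₁ ∈ ℝ, w₂ > 0, s₂ ∈ ℝ, T > 0, and define H = 2C₁s₂ + s₂e^{−Tθ} − (w₂e^{−Tθ} − C₁²w₂e^{Tθ})/θ + C₁²s₂e^{Tθ} + 2C₁Tw₂. Then p₂(t) = (−w₂e^{2tθ}C₁² − 2tθw₂e^{tθ}C₁ + w₂ + Hθe^{tθ})/(θ(C₁e^{tθ}+1)²) satisfies the linear ODE ṗ₂(t) = −w₂ − 2p₂(t)(θ/2 − θ/(C₁e^{θt}+1)) on any interval where C₁e^{tθ} + 1 ≠ 0, with terminal condition p₂(T) = s₂. -/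

import Mathlib

/-- Closed-form solution of the linear ODE for the quadratic coefficient p₂ of
Player 2's value function:
ṗ₂(t) = −w₂ − 2p₂(t)(θ/2 − θ/(C₁e^{θt}+1)) with p₂(T) = s₂. -/
theorem p2_closed_form (θ C₁ w₂ s₂ T : ℝ)
    (hθ : 0 < θ) (hw : 0 < w₂) (hT : 0 < T)
    (hTden : C₁ * Real.exp (T * θ) + 1 ≠ 0) :
    let H := 2 * C₁ * s₂ + s₂ * Real.exp (-T * θ)
      - (w₂ * Real.exp (-T * θ) - C₁ ^ 2 * w₂ * Real.exp (T * θ)) / θ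
      + C₁ ^ 2 * s₂ * Real.exp (T * θ) + 2 * C₁ * T * w₂
    let p₂ := fun t : ℝ =>
      (-w₂ * Real.exp (2 * t * θ) * C₁ ^ 2 - 2 * t * θ * w₂ * Real.exp (t * θ) * C₁
          + w₂ + H * θ * Real.exp (t * θ)) / (θ * (C₁ * Real.exp (t * θ) + 1) ^ 2)
    (∀ t : ℝ, C₁ * Real.exp (t * θ) + 1 ≠ 0 →
        HasDerivAt p₂ (-w₂ - 2 * p₂ t * (θ / 2 - θ / (C₁ * Real.exp (θ * t) + 1))) t) ∧
      p₂ T = s₂ := by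
  intro H p₂
  have hθ0 : θ ≠ 0 := ne_of_gt hθ
  constructor
  · intro t hden
    have hE : HasDerivAt (fun t : ℝ => Real.exp (t * θ)) (θ * Real.exp (t * θ)) t := by
      simpa [mul_comm, Function.comp_def] using (Real.hasDerivAt_exp (t * θ)).comp t
        ((hasDerivAt_id t).mul_const θ)
    have hE2 : HasDerivAt (fun t : ℝ => Real.exp (2 * t * θ)) (2 * θ * Real.exp (2 * t * θ)) t := by
      have : HasDerivAt (fun t : ℝ => 2 * t * θ) (2 * θ) t := by
        simpa using ((hasDerivAt_id t).const_mul 2).mul_const θ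
      simpa [mul_comm, Function.comp_def] using (Real.hasDerivAt_exp (2 * t * θ)).comp t this
    -- numerator
    have hN : HasDerivAt (fun t : ℝ =>
        -w₂ * Real.exp (2 * t * θ) * C₁ ^ 2 - 2 * t * θ * w₂ * Real.exp (t * θ) * C₁
          + w₂ + H * θ * Real.exp (t * θ))
        ((-w₂ * (2 * θ * Real.exp (2 * t * θ))) * C₁ ^ 2
          - ((2 * θ * w₂) * Real.exp (t * θ)
              + (2 * t * θ * w₂) * (θ * Real.exp (t * θ))) * C₁
          + H * θ * (θ * Real.exp (t * θ))) t := by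
      have h1 : HasDerivAt (fun t : ℝ => -w₂ * Real.exp (2 * t * θ) * C₁ ^ 2)
          ((-w₂ * (2 * θ * Real.exp (2 * t * θ))) * C₁ ^ 2) t :=
        (hE2.const_mul (-w₂)).mul_const _
      have h2 : HasDerivAt (fun t : ℝ => 2 * t * θ * w₂ * Real.exp (t * θ) * C₁)
          (((2 * θ * w₂) * Real.exp (t * θ)
              + (2 * t * θ * w₂) * (θ * Real.exp (t * θ))) * C₁) t := by
        have ha : HasDerivAt (fun t : ℝ => 2 * t * θ * w₂) (2 * θ * w₂) t := by
          simpa using (((hasDerivAt_id t).const_mul 2).mul_const θ).mul_const w₂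
        exact ((ha.mul hE).mul_const C₁)
      have h3 : HasDerivAt (fun t : ℝ => H * θ * Real.exp (t * θ))
          (H * θ * (θ * Real.exp (t * θ))) t := hE.const_mul _
      simpa [Pi.add_def] using ((h1.sub h2).add_const w₂).add h3
    -- denominator
    have hD : HasDerivAt (fun t : ℝ => θ * (C₁ * Real.exp (t * θ) + 1) ^ 2)
        (θ * (2 * (C₁ * Real.exp (t * θ) + 1) * (C₁ * (θ * Real.exp (t * θ))))) t := by
      have : HasDerivAt (fun t : ℝ => (C₁ * Real.exp (t * θ) + 1) ^ 2)
          (2 * (C₁ * Real.exp (t * θ) + 1) ^ 1 * (C₁ * (θ * Real.exp (t * θ)))) t :=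
        (((hE.const_mul C₁).add_const 1).pow 2)
      simpa [mul_assoc] using this.const_mul θ
    have hDne : θ * (C₁ * Real.exp (t * θ) + 1) ^ 2 ≠ 0 :=
      mul_ne_zero hθ0 (pow_ne_zero 2 hden)
    have hderiv := hN.div hD hDne
    convert hderiv using 1
    show -w₂ - 2 * p₂ t * (θ / 2 - θ / (C₁ * Real.exp (θ * t) + 1)) = _
    have hcomm : Real.exp (θ * t) = Real.exp (t * θ) := by rw [mul_comm]
    have hexp2 : Real.exp (2 * t * θ) = Real.exp (t * θ) * Real.exp (t * θ) := by
      rw [← Real.exp_add]; ring_nf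
    simp only [p₂, hcomm, hexp2]
    rw [div_sub_div _ _ (by positivity : (2:ℝ) ≠ 0) hden]
    field_simp
    have hne3 : (Real.exp (t * θ) * C₁ + 1) ^ 3 ≠ 0 := pow_ne_zero 3 (by rwa [mul_comm] at hden)
    rw [eq_div_iff hne3, sub_mul, div_mul_cancel₀ _ hne3]
    ring
    all_goals rfl
  · show _ = s₂
    simp only [p₂]
    have hDne : θ * (C₁ * Real.exp (T * θ) + 1) ^ 2 ≠ 0 :=
      mul_ne_zero hθ0 (pow_ne_zero 2 hTden)
    rw [div_eq_iff hDne]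
    have hexp2 : Real.exp (2 * T * θ) = Real.exp (T * θ) * Real.exp (T * θ) := by
      rw [← Real.exp_add]; ring_nf
    have hneg : Real.exp (-T * θ) = (Real.exp (T * θ))⁻¹ := by
      rw [← Real.exp_neg]; ring_nf
    have hEne : Real.exp (T * θ) ≠ 0 := Real.exp_ne_zero _
    simp only [H, hexp2, hneg]
    field_simp
    ring
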